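/- Let q > 0 and let G be a finite weighted graph with Laplacian L on N vertices. Then ∑_{F ∈ 𝓕} q^{|roots(F)|} · w(F) = det(qI + L), where the sum is over all spanning rooted forests F of G, |roots(F)| is the number of trees (roots) in F, and w(F) is the product of the edge weights of F. -/

import Mathlib

open scoped Classical

noncomputable section MFTAux

variable {V : Type*} [Fintype V] [DecidableEq V]

/-- Expansion weight of entry `x` given permutation `σ` and parent choice `o`. -/
private def Tw (w : V → V → ℝ) (q : ℝ) (σ : Equiv.Perm V) (x : V) (o : Option V) : ℝ :=
  if σ x = x then o.elim q (fun z => if z = x then 0 else w x z)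
  else if o = some (σ x) then -w x (σ x) else 0

private lemma core (w : V → V → ℝ) (q : ℝ) (g : V → Option V) :
    ∑ σ : Equiv.Perm V, ((Equiv.Perm.sign σ : ℤ) : ℝ) * ∏ x : V, Tw w q σ x (g x)
    = if (∀ x : V, ∀ n ∈ Finset.Icc 1 (Fintype.card V),
          (fun y => ((g y).getD y))^[n] x = x → g x = none)
      then ∏ x : V, (g x).elim q (fun z => if z = x then 0 else w x z) else 0 := by
  classical
  set h : V → V := fun y => (g y).getD y with hh
  have hTsl : ∀ (σ : Equiv.Perm V) (x : V), g x = some x → Tw w q σ x (g x) = 0 := by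
    intro σ x hgx
    by_cases hs : σ x = x
    · rw [hgx]; simp [Tw, hs]
    · rw [hgx]; simp only [Tw, if_neg hs]
      rw [if_neg]
      intro he
      exact hs ((Option.some.inj he).symm)
  by_cases hsl : ∃ x, g x = some x
  · obtain ⟨x0, hx0⟩ := hsl
    have hne : ¬ (∀ x : V, ∀ n ∈ Finset.Icc 1 (Fintype.card V),
        h^[n] x = x → g x = none) := by
      intro hall
      have hcard : 0 < Fintype.card V := @Fintype.card_pos V _ ⟨x0⟩
      have h1 : (1 : ℕ) ∈ Finset.Icc 1 (Fintype.card V) := by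
        rw [Finset.mem_Icc]; omega
      have hx : h^[1] x0 = x0 := by simp [hh, hx0]
      have := hall x0 1 h1 hx
      rw [this] at hx0; exact Option.some_ne_none _ hx0.symm
    rw [if_neg hne]
    refine Finset.sum_eq_zero fun σ _ => ?_
    rw [Finset.prod_eq_zero (Finset.mem_univ x0) (hTsl σ x0 hx0), mul_zero]
  · push_neg at hsl
    have hget : ∀ x z, g x = some z → h x = z := by intro x z hx; simp [hh, hx]
    have hroot : ∀ x, g x = none → h x = x := by intro x hx; simp [hh, hx]
    have hhx : ∀ x, g x ≠ none → h x ≠ x := by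
      intro x hx
      cases hgx : g x with
      | none => exact absurd hgx hx
      | some z =>
        rw [hget x z hgx]
        intro hzx; rw [hzx] at hgx; exact hsl x hgx
    have hne_root : ∀ x, h x ≠ x → g x = some (h x) := by
      intro x hx
      cases hgx : g x with
      | none => exact absurd (hroot x hgx) hx
      | some z => rw [hget x z hgx]
    have hmove : ∀ σ : Equiv.Perm V, (∀ x, σ x ≠ x → g x = some (σ x)) →
        ∀ x, σ x ≠ x → σ x = h x := by
      intro σ hσ x hx; exact (hget x _ (hσ x hx)).symm
    have hzero : ∀ σ : Equiv.Perm V, ¬ (∀ x, σ x ≠ x → g x = some (σ x)) →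
        ((Equiv.Perm.sign σ : ℤ) : ℝ) * ∏ x : V, Tw w q σ x (g x) = 0 := by
      intro σ hσ
      push_neg at hσ
      obtain ⟨x, hx1, hx2⟩ := hσ
      have : Tw w q σ x (g x) = 0 := by
        simp only [Tw]; rw [if_neg hx1, if_neg hx2]
      rw [Finset.prod_eq_zero (Finset.mem_univ x) this, mul_zero]
    rw [← Finset.sum_filter_of_ne (p := fun σ : Equiv.Perm V =>
        ∀ x, σ x ≠ x → g x = some (σ x))
        (fun σ _ hfs => by by_contra hc; exact hfs (hzero σ hc))]
    by_cases hac : (∀ x : V, ∀ n ∈ Finset.Icc 1 (Fintype.card V),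
        h^[n] x = x → g x = none)
    · rw [if_pos hac]
      have hone : Finset.filter
          (fun σ : Equiv.Perm V => ∀ x, σ x ≠ x → g x = some (σ x)) Finset.univ
          = {1} := by
        apply Finset.eq_singleton_iff_unique_mem.mpr
        constructor
        · exact Finset.mem_filter.mpr ⟨Finset.mem_univ _, fun x hx => absurd rfl hx⟩
        · intro σ hσ
          have hcσ := (Finset.mem_filter.mp hσ).2
          by_contra hσ1
          have hex : ∃ x, σ x ≠ x := by
            by_contra hall; push_neg at hall
            exact hσ1 (Equiv.ext fun x => hall x)
          obtain ⟨x, hx⟩ := hex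
          have hmoved : ∀ n, σ (σ^[n] x) ≠ σ^[n] x := by
            intro n; induction n with
            | zero => exact hx
            | succ n ih =>
              rw [Function.iterate_succ_apply']
              intro hfix
              exact ih (σ.injective hfix)
          have hiter : ∀ n, σ^[n] x = h^[n] x := by
            intro n; induction n with
            | zero => rfl
            | succ n ih =>
              rw [Function.iterate_succ_apply', Function.iterate_succ_apply', ih]
              rw [← ih]
              exact hmove σ hcσ _ (hmoved n)
          have key : ∀ i j : ℕ, i < j → j ≤ Fintype.card V → σ^[i] x = σ^[j] x → False := by
            intro i j hij hjN heq
            have hk : σ^[i] (σ^[j - i] x) = σ^[i] x := by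
              rw [← Function.iterate_add_apply, Nat.add_sub_cancel' (le_of_lt hij)]
              exact heq.symm
            have hkx : σ^[j - i] x = x := Function.Injective.iterate σ.injective i hk
            have hmem : (j - i) ∈ Finset.Icc 1 (Fintype.card V) := by
              rw [Finset.mem_Icc]; omega
            have hgn := hac x (j - i) hmem (by rw [← hiter]; exact hkx)
            have hgx := hcσ x hx
            rw [hgn] at hgx; exact Option.some_ne_none _ hgx.symm
          have hcard : (Finset.univ : Finset V).card < (Finset.range (Fintype.card V + 1)).card := by
            simp
          obtain ⟨i, hi, j, hj, hij, heq⟩ :=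
            Finset.exists_ne_map_eq_of_card_lt_of_maps_to hcard
              (f := fun n => σ^[n] x) (fun a _ => Finset.mem_univ _)
          have hi' := Nat.lt_succ_iff.mp (Finset.mem_range.mp hi)
          have hj' := Nat.lt_succ_iff.mp (Finset.mem_range.mp hj)
          rcases Nat.lt_or_ge i j with hlt | hge
          · exact key i j hlt hj' heq
          · exact key j i (lt_of_le_of_ne hge (Ne.symm hij)) hi' heq.symm
      rw [hone, Finset.sum_singleton]
      simp only [Equiv.Perm.sign_one, Units.val_one, Int.cast_one, one_mul]
      exact Finset.prod_congr rfl fun x _ => by simp [Tw]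
    · rw [if_neg hac]
      push_neg at hac
      obtain ⟨p, n, hnmem, hpn, hgp⟩ := hac
      obtain ⟨hn1, hnN⟩ := Finset.mem_Icc.mp hnmem
      have hppt : Function.IsPeriodicPt h n p := hpn
      set m := Function.minimalPeriod h p with hm
      have hm0 : 0 < m := hppt.minimalPeriod_pos (by omega)
      have hpm : h^[m] p = p := Function.iterate_minimalPeriod
      have hhp : h p ≠ p := hhx p hgp
      have hmul : ∀ j, h^[m * j] p = p := by
        intro j; induction j with
        | zero => simp
        | succ j ih => rw [Nat.mul_succ, Function.iterate_add_apply, hpm, ih]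
      have hmod : ∀ j, h^[j] p = h^[j % m] p := by
        intro j
        conv_lhs => rw [← Nat.mod_add_div j m]
        rw [Function.iterate_add_apply, hmul]
      set C : Finset V := (Finset.range m).image (fun i => h^[i] p) with hC
      have memC : ∀ y, y ∈ C ↔ ∃ i, i < m ∧ h^[i] p = y := by
        intro y; rw [hC]; simp [Finset.mem_image]
      have hpC : p ∈ C := (memC p).mpr ⟨0, hm0, rfl⟩
      have hCiter : ∀ j y, y ∈ C → h^[j] y ∈ C := by
        intro j y hy
        obtain ⟨i, him, hiy⟩ := (memC y).mp hy
        refine (memC _).mpr ⟨(j + i) % m, Nat.mod_lt _ hm0, ?_⟩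
        rw [← hmod, Function.iterate_add_apply, hiy]
      have hCcl : ∀ y ∈ C, h y ∈ C := by
        intro y hy
        simpa using hCiter 1 y hy
      have hCm : ∀ y ∈ C, h^[m] y = y := by
        intro y hy
        obtain ⟨i, him, hiy⟩ := (memC y).mp hy
        rw [← hiy, ← Function.iterate_add_apply, Nat.add_comm m i,
          Function.iterate_add_apply, hpm]
      have hC_nf : ∀ y ∈ C, h y ≠ y := by
        intro y hy hfix
        obtain ⟨i, him, hiy⟩ := (memC y).mp hy
        have hstay : ∀ j, h^[i + j] p = y := by
          intro j; induction j with
          | zero => simpa using hiy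
          | succ j ih =>
            rw [show i + (j+1) = (i+j)+1 by omega, Function.iterate_succ_apply', ih, hfix]
        have hile : i + 1 ≤ m * (i+1) := Nat.le_mul_of_pos_left (i+1) hm0
        have h1 : h^[m * (i+1)] p = p := hmul (i+1)
        rw [show m * (i+1) = i + (m * (i+1) - i) by omega, hstay] at h1
        exact hhp (by rw [← h1]; exact hfix)
      have hgC : ∀ y ∈ C, g y = some (h y) := fun y hy => hne_root y (hC_nf y hy)
      have hinj : ∀ i, i < m → ∀ j, j < m → h^[i] p = h^[j] p → i = j := by
        intro i hi j hj hij
        exact Function.iterate_injOn_Iio_minimalPeriod (Set.mem_Iio.mpr hi)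
          (Set.mem_Iio.mpr hj) hij
      have hcard : C.card = m := by
        rw [hC, Finset.card_image_of_injOn, Finset.card_range]
        intro i hi j hj hij
        exact hinj i (by simpa using hi) j (by simpa using hj) hij
      have hhinjC : ∀ a ∈ C, ∀ b ∈ C, h a = h b → a = b := by
        intro a ha b hb hab
        have h2 : ∀ y ∈ C, h^[m-1] (h y) = y := by
          intro y hy
          have e := (Function.iterate_add_apply h (m-1) 1 y).symm
          simp only [Function.iterate_one] at e
          rw [show m - 1 + 1 = m by omega] at e
          rw [e]; exact hCm y hy
        have h1 : h^[m-1] (h a) = h^[m-1] (h b) := by rw [hab]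
        rw [h2 a ha, h2 b hb] at h1; exact h1
      set cf : V → V := fun x => if x ∈ C then h x else x with hcf
      have hcfinj : Function.Injective cf := by
        intro a b hab
        rw [hcf] at hab
        by_cases ha : a ∈ C <;> by_cases hb : b ∈ C
        · simp only [if_pos ha, if_pos hb] at hab
          exact hhinjC a ha b hb hab
        · exfalso; simp only [if_pos ha, if_neg hb] at hab
          apply hb; rw [← hab]; exact hCcl a ha
        · exfalso; simp only [if_neg ha, if_pos hb] at hab
          apply ha; rw [hab]; exact hCcl b hb
        · simpa [if_neg ha, if_neg hb] using hab
      have hcbij : Function.Bijective cf := Finite.injective_iff_bijective.mp hcfinj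
      set c : Equiv.Perm V := Equiv.ofBijective cf hcbij with hcdef
      have hcap : ∀ x, c x = cf x := fun x => rfl
      have hcC : ∀ x ∈ C, c x = h x := by intro x hx; rw [hcap, hcf]; simp [hx]
      have hcnC : ∀ x ∉ C, c x = x := by intro x hx; rw [hcap, hcf]; simp [hx]
      have hcp : c p = h p := hcC p hpC
      have hcpow : ∀ j, c^[j] p = h^[j] p := by
        intro j; induction j with
        | zero => rfl
        | succ j ih =>
          rw [Function.iterate_succ_apply', Function.iterate_succ_apply', ih]
          exact hcC _ (hCiter j p hpC)
      have hciscycle : c.IsCycle := by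
        refine ⟨p, ?_, ?_⟩
        · rw [hcp]; exact hhp
        · intro y hy
          have hyC : y ∈ C := by
            by_contra hyn; exact hy (hcnC y hyn)
          obtain ⟨i, him, hiy⟩ := (memC y).mp hyC
          refine ⟨(i : ℤ), ?_⟩
          rw [zpow_natCast, ← Equiv.Perm.iterate_eq_pow, hcpow, hiy]
      have hsupc : c.support = C := by
        ext x
        rw [Equiv.Perm.mem_support]
        constructor
        · intro hx; by_contra hxn; exact hx (hcnC x hxn)
        · intro hx; rw [hcC x hx]; exact hC_nf x hx
      have hsignc : ((Equiv.Perm.sign c : ℤ) : ℝ) = -(-1)^m := by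
        have hs := hciscycle.sign
        rw [hsupc, hcard] at hs
        rw [hs]
        push_cast
        ring
      have hpred : ∀ y : V, h (h^[m-1] y) = h^[m] y := by
        intro y
        have e := (Function.iterate_add_apply h 1 (m-1) y).symm
        simp only [Function.iterate_one] at e
        rw [show 1 + (m-1) = m by omega] at e
        exact e
      have hcsymmC : ∀ x ∈ C, c.symm x = h^[m-1] x := by
        intro x hx
        rw [Equiv.symm_apply_eq, hcC _ (hCiter (m-1) x hx), hpred x]
        exact (hCm x hx).symm
      have hcsymmnC : ∀ x ∉ C, c.symm x = x := by
        intro x hx; rw [Equiv.symm_apply_eq]; exact (hcnC x hx).symm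
      have hcsymmCmem : ∀ x ∈ C, c.symm x ∈ C := by
        intro x hx; rw [hcsymmC x hx]; exact hCiter _ x hx
      have claimA : ∀ σ : Equiv.Perm V, (∀ x, σ x ≠ x → g x = some (σ x)) →
          ∀ x, x ∈ C → σ x = h x → ∀ j, σ (h^[j] x) = h (h^[j] x) := by
        intro σ hσ x hxC hσx j
        induction j with
        | zero => simpa using hσx
        | succ j ih =>
          by_cases hz : σ (h^[j+1] x) = h^[j+1] x
          · exfalso
            have h1 : σ (h^[j] x) = h^[j+1] x := by
              rw [ih]; exact (Function.iterate_succ_apply' h j x).symm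
            have h3 := σ.injective (h1.trans hz.symm)
            have hfix : h (h^[j] x) = h^[j] x := by
              rw [← Function.iterate_succ_apply' h j x]; exact h3.symm
            exact hC_nf _ (hCiter j x hxC) hfix
          · exact hmove σ hσ _ hz
      have hstruct1 : ∀ σ : Equiv.Perm V, (∀ x, σ x ≠ x → g x = some (σ x)) →
          σ p = p → ∀ y ∈ C, σ y = y := by
        intro σ hσ hp y hy
        by_contra hyy
        have hσy : σ y = h y := hmove σ hσ y hyy
        obtain ⟨i, him, hiy⟩ := (memC y).mp hy
        have hpiter : h^[m - i] y = p := by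
          rw [← hiy, ← Function.iterate_add_apply, show m - i + i = m by omega, hpm]
        have hA := claimA σ hσ y hy hσy (m - i)
        rw [hpiter] at hA
        exact hhp (by rw [← hA]; exact hp)
      have hstruct2 : ∀ σ : Equiv.Perm V, (∀ x, σ x ≠ x → g x = some (σ x)) →
          σ p ≠ p → ∀ y ∈ C, σ y = h y := by
        intro σ hσ hp y hy
        have hσp : σ p = h p := hmove σ hσ p hp
        obtain ⟨i, him, hiy⟩ := (memC y).mp hy
        have hA := claimA σ hσ p hpC hσp i
        rw [hiy] at hA; exact hA
      have hcompat_mul : ∀ σ : Equiv.Perm V, (∀ x, σ x ≠ x → g x = some (σ x)) →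
          σ p = p → ∀ x, (σ * c) x ≠ x → g x = some ((σ * c) x) := by
        intro σ hσ hp x hx
        by_cases hxC : x ∈ C
        · have hsc : (σ * c) x = h x := by
            rw [Equiv.Perm.mul_apply, hcC x hxC]
            exact hstruct1 σ hσ hp (h x) (hCcl x hxC)
          rw [hsc]; exact hgC x hxC
        · have hsc : (σ * c) x = σ x := by rw [Equiv.Perm.mul_apply, hcnC x hxC]
          rw [hsc] at hx ⊢
          exact hσ x hx
      have hmulinv_fixC : ∀ σ : Equiv.Perm V, (∀ x, σ x ≠ x → g x = some (σ x)) →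
          σ p ≠ p → ∀ x ∈ C, (σ * c⁻¹) x = x := by
        intro σ hσ hp x hxC
        have h1 : (σ * c⁻¹) x = σ (c.symm x) := rfl
        rw [h1, hstruct2 σ hσ hp _ (hcsymmCmem x hxC), hcsymmC x hxC, hpred x]
        exact hCm x hxC
      have hcompat_mulinv : ∀ σ : Equiv.Perm V, (∀ x, σ x ≠ x → g x = some (σ x)) →
          σ p ≠ p → ∀ x, (σ * c⁻¹) x ≠ x → g x = some ((σ * c⁻¹) x) := by
        intro σ hσ hp x hx
        by_cases hxC : x ∈ C
        · exact absurd (hmulinv_fixC σ hσ hp x hxC) hx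
        · have h1 : (σ * c⁻¹) x = σ x := by
            have h2 : (σ * c⁻¹) x = σ (c.symm x) := rfl
            rw [h2, hcsymmnC x hxC]
          rw [h1] at hx ⊢; exact hσ x hx
      have hfix_mul : ∀ σ : Equiv.Perm V, (∀ x, σ x ≠ x → g x = some (σ x)) →
          σ p = p → (σ * c) p ≠ p := by
        intro σ hσ hp
        rw [Equiv.Perm.mul_apply, hcp, hstruct1 σ hσ hp (h p) (hCcl p hpC)]
        exact hhp
      have hkey : ∀ σ : Equiv.Perm V, (∀ x, σ x ≠ x → g x = some (σ x)) →
          σ p = p →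
          ((Equiv.Perm.sign (σ * c) : ℤ) : ℝ) * ∏ x : V, Tw w q (σ * c) x (g x)
          = -(((Equiv.Perm.sign σ : ℤ) : ℝ) * ∏ x : V, Tw w q σ x (g x)) := by
        intro σ hσ hp
        have hfixC := hstruct1 σ hσ hp
        have hptw : ∀ x : V, Tw w q (σ * c) x (g x)
            = (if x ∈ C then (-1 : ℝ) else 1) * Tw w q σ x (g x) := by
          intro x
          by_cases hxC : x ∈ C
          · have hσx : σ x = x := hfixC x hxC
            have hσcx : (σ * c) x = h x := by
              rw [Equiv.Perm.mul_apply, hcC x hxC]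
              exact hfixC (h x) (hCcl x hxC)
            have hhxne : h x ≠ x := hC_nf x hxC
            have hgx : g x = some (h x) := hgC x hxC
            have e1 : Tw w q (σ * c) x (g x) = -w x (h x) := by
              rw [hgx]; simp only [Tw]
              rw [if_neg (by rw [hσcx]; exact hhxne), hσcx, if_pos rfl]
            have e2 : Tw w q σ x (g x) = w x (h x) := by
              rw [hgx]; simp only [Tw]
              rw [if_pos hσx]
              simp [hhxne]
            rw [if_pos hxC, e1, e2]; ring
          · have hσcx : (σ * c) x = σ x := by rw [Equiv.Perm.mul_apply, hcnC x hxC]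
            rw [if_neg hxC, one_mul]
            simp only [Tw, hσcx]
        rw [Finset.prod_congr rfl (fun x _ => hptw x), Finset.prod_mul_distrib]
        have hfiltC : Finset.filter (fun x => x ∈ C) Finset.univ = C := by
          ext x; simp
        have hprodsign : ∏ x : V, (if x ∈ C then (-1 : ℝ) else 1) = (-1)^m := by
          rw [← Finset.prod_filter_mul_prod_filter_not Finset.univ (fun x => x ∈ C)]
          have e1 : ∏ x ∈ Finset.filter (fun x => x ∈ C) Finset.univ,
              (if x ∈ C then (-1:ℝ) else 1) = (-1)^m := by
            rw [Finset.prod_congr rfl (fun x hx => if_pos (Finset.mem_filter.mp hx).2),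
              Finset.prod_const, hfiltC, hcard]
          have e2 : ∏ x ∈ Finset.filter (fun x => ¬ x ∈ C) Finset.univ,
              (if x ∈ C then (-1:ℝ) else 1) = 1 :=
            Finset.prod_eq_one fun x hx => if_neg (Finset.mem_filter.mp hx).2
          rw [e1, e2, mul_one]
        have hsm : ((Equiv.Perm.sign (σ * c) : ℤ) : ℝ)
            = ((Equiv.Perm.sign σ : ℤ) : ℝ) * ((Equiv.Perm.sign c : ℤ) : ℝ) := by
          rw [Equiv.Perm.sign_mul, Units.val_mul, Int.cast_mul]
        rw [hprodsign, hsm, hsignc]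
        have h11 : ((-1:ℝ))^m * (-1)^m = 1 := by rw [← mul_pow]; norm_num
        linear_combination
          (-(((Equiv.Perm.sign σ : ℤ) : ℝ) * ∏ x : V, Tw w q σ x (g x))) * h11
      refine Finset.sum_involution
        (fun σ _ => if σ p = p then σ * c else σ * c⁻¹) ?_ ?_ ?_ ?_
      · intro σ hσ
        have hcσ := (Finset.mem_filter.mp hσ).2
        by_cases hp : σ p = p
        · rw [if_pos hp, hkey σ hcσ hp]; ring
        · rw [if_neg hp]
          have hc1 := hcompat_mulinv σ hcσ hp
          have hp1 : (σ * c⁻¹) p = p := hmulinv_fixC σ hcσ hp p hpC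
          have hk := hkey (σ * c⁻¹) hc1 hp1
          rw [show σ * c⁻¹ * c = σ by group] at hk
          rw [hk]; ring
      · intro σ hσ _
        by_cases hp : σ p = p
        · rw [if_pos hp]
          intro he
          have hc1 : c = 1 := mul_left_cancel (he.trans (mul_one σ).symm)
          have : h p = p := by rw [← hcp, hc1]; rfl
          exact hhp this
        · rw [if_neg hp]
          intro he
          have hc1 : c⁻¹ = 1 := mul_left_cancel (he.trans (mul_one σ).symm)
          have hc2 : c = 1 := by rw [← inv_inv c, hc1, inv_one]
          have : h p = p := by rw [← hcp, hc2]; rfl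
          exact hhp this
      · intro σ hσ
        have hcσ := (Finset.mem_filter.mp hσ).2
        by_cases hp : σ p = p
        · rw [if_pos hp]
          exact Finset.mem_filter.mpr ⟨Finset.mem_univ _, hcompat_mul σ hcσ hp⟩
        · rw [if_neg hp]
          exact Finset.mem_filter.mpr ⟨Finset.mem_univ _, hcompat_mulinv σ hcσ hp⟩
      · intro σ hσ
        have hcσ := (Finset.mem_filter.mp hσ).2
        by_cases hp : σ p = p
        · simp only [if_pos hp]
          rw [if_neg (hfix_mul σ hcσ hp)]
          group
        · simp only [if_neg hp]
          rw [if_pos (hmulinv_fixC σ hcσ hp p hpC)]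
          group

end MFTAux

/-- The rooted matrix-forest theorem: the generating polynomial of spanning rooted
forests, weighted by `q^(#roots) · w(F)`, equals `det(qI + L)`.
A rooted forest is encoded by a parent map `f : V → Option V` (roots point to `none`)
whose parent dynamics has no nontrivial cycles. -/
theorem stmt7 {V : Type*} [Fintype V] [DecidableEq V] (w : V → V → ℝ)
    (hsymm : ∀ x y, w x y = w y x) (q : ℝ) (hq : 0 < q) :
    ∑ f ∈ Finset.univ.filter (fun f : V → Option V =>
        ∀ x : V, ∀ n ∈ Finset.Icc 1 (Fintype.card V),
          (fun y => ((f y).getD y))^[n] x = x → f x = none),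
      q ^ (Finset.univ.filter fun x => f x = none).card * ∏ x : V, (f x).elim 1 (w x)
    = (q • (1 : Matrix V V ℝ) +
        Matrix.of fun x y =>
          if x = y then ∑ z ∈ Finset.univ.erase x, w x z else -w x y).det := by
  classical
  set M : Matrix V V ℝ := q • (1 : Matrix V V ℝ) +
      Matrix.of fun x y =>
        if x = y then ∑ z ∈ Finset.univ.erase x, w x z else -w x y with hM
  have hMentry : ∀ (σ : Equiv.Perm V) (x : V),
      M (σ x) x = ∑ o : Option V, Tw w q σ x o := by
    intro σ x
    rw [Fintype.sum_option]
    by_cases hs : σ x = x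
    · have hMd : M (σ x) x = q + ∑ z ∈ Finset.univ.erase x, w x z := by
        rw [hs, hM]
        simp [Matrix.add_apply, Matrix.smul_apply, Matrix.one_apply]
      have hsum : ∑ z : V, (if z = x then (0:ℝ) else w x z)
          = ∑ z ∈ Finset.univ.erase x, w x z := by
        rw [← Finset.sum_erase_add Finset.univ _ (Finset.mem_univ x), if_pos rfl, add_zero]
        exact Finset.sum_congr rfl fun z hz => if_neg (Finset.mem_erase.mp hz).1
      rw [hMd]
      simp only [Tw, if_pos hs, Option.elim_none, Option.elim_some]
      rw [hsum]
    · have hMd : M (σ x) x = -w x (σ x) := by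
        rw [hM]
        simp only [Matrix.add_apply, Matrix.smul_apply, Matrix.one_apply, Matrix.of_apply,
          if_neg hs, smul_zero, zero_add]
        rw [hsymm x (σ x)]
      rw [hMd]
      simp only [Tw, if_neg hs, Option.elim_none, Option.elim_some]
      simp
  have main : M.det = ∑ f ∈ Finset.univ.filter (fun f : V → Option V =>
        ∀ x : V, ∀ n ∈ Finset.Icc 1 (Fintype.card V),
          (fun y => ((f y).getD y))^[n] x = x → f x = none),
      q ^ (Finset.univ.filter fun x => f x = none).card * ∏ x : V, (f x).elim 1 (w x) := by
    rw [Matrix.det_apply]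
    have step1 : ∀ σ : Equiv.Perm V, Equiv.Perm.sign σ • ∏ x : V, M (σ x) x
        = ∑ g : V → Option V, ((Equiv.Perm.sign σ : ℤ) : ℝ) * ∏ x : V, Tw w q σ x (g x) := by
      intro σ
      rw [Units.smul_def, zsmul_eq_mul]
      rw [Finset.prod_congr rfl (fun x _ => hMentry σ x), Finset.prod_univ_sum,
        Fintype.piFinset_univ, Finset.mul_sum]
    rw [Finset.sum_congr rfl (fun σ _ => step1 σ), Finset.sum_comm,
      Finset.sum_congr rfl (fun g _ => core w q g), Finset.sum_filter]
    refine Finset.sum_congr rfl fun g _ => ?_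
    by_cases hgp : ∀ x : V, ∀ n ∈ Finset.Icc 1 (Fintype.card V),
        (fun y => ((g y).getD y))^[n] x = x → g x = none
    swap
    · rw [if_neg hgp, if_neg hgp]
    rw [if_pos hgp, if_pos hgp]
    have hnsl : ∀ x, g x ≠ some x := by
      intro x hx
      have hcard : 0 < Fintype.card V := @Fintype.card_pos V _ ⟨x⟩
      have h1 : (1:ℕ) ∈ Finset.Icc 1 (Fintype.card V) := by
        rw [Finset.mem_Icc]; omega
      have h2 : (fun y => ((g y).getD y))^[1] x = x := by simp [hx]
      have := hgp x 1 h1 h2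
      rw [this] at hx; exact Option.some_ne_none _ hx.symm
    have lhs_eq : ∏ x : V, (g x).elim q (fun z => if z = x then 0 else w x z)
        = (∏ x ∈ Finset.filter (fun x => g x = none) Finset.univ, q)
          * ∏ x ∈ Finset.filter (fun x => ¬ g x = none) Finset.univ, (g x).elim 1 (w x) := by
      rw [← Finset.prod_filter_mul_prod_filter_not Finset.univ (fun x => g x = none)]
      congr 1
      · exact Finset.prod_congr rfl fun x hx => by
          rw [(Finset.mem_filter.mp hx).2]; rfl
      · refine Finset.prod_congr rfl fun x hx => ?_
        have hx' := (Finset.mem_filter.mp hx).2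
        cases hgx : g x with
        | none => exact absurd hgx hx'
        | some z =>
          have hzx : z ≠ x := by
            intro he; rw [he] at hgx; exact hnsl x hgx
          simp [hzx]
    have rhs_eq : ∏ x : V, (g x).elim 1 (w x)
        = (∏ _x ∈ Finset.filter (fun x => g x = none) Finset.univ, (1:ℝ))
          * ∏ x ∈ Finset.filter (fun x => ¬ g x = none) Finset.univ, (g x).elim 1 (w x) := by
      rw [← Finset.prod_filter_mul_prod_filter_not Finset.univ (fun x => g x = none)]
      congr 1
      exact Finset.prod_congr rfl fun x hx => by rw [(Finset.mem_filter.mp hx).2]; rfl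
    rw [lhs_eq, rhs_eq]
    simp [Finset.prod_const]
  exact main.symm
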